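/- arXiv:2208.04092 — 3 statements merged into one kernel-verified Lean document; each statement's English description precedes it below -/
import Mathlib

section
/- Let ω = α_2 + α_3 + α_4 + α_5 be a polynomial 1-form on ℂ^n, where each α_j has homogeneous polynomial coefficients of degree j, and suppose i_R(ω) = 0 and ω ∧ dω = 0 where R is the Euler vector field. Then α_j ∧ α_k = 0 for all 2 ≤ j < k ≤ 5. -/
/-!
STATEMENT 2. Let ω = α₂ + α₃ + α₄ + α₅ be a polynomial 1-form on ℂⁿ, where αⱼ has
homogeneous polynomial coefficients of degree j, with i_R(ω) = 0 and ω ∧ dω = 0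
(R the Euler vector field).  Then αⱼ ∧ αₖ = 0 for all 2 ≤ j < k ≤ 5.
Components: (α ∧ β)_{ab} = α_a β_b − α_b β_a; integrability as in Statement 1.
-/

open MvPolynomial

lemma euler_mono {n : ℕ} (s : Fin n →₀ ℕ) (c : ℂ) (i : Fin n) :
    X i * pderiv i (monomial s c) = monomial s (c * (s i : ℂ)) := by
  rw [pderiv_monomial]
  rcases Nat.eq_zero_or_pos (s i) with h | h
  · simp [h]
  · have hs : (s - Finsupp.single i 1) + Finsupp.single i 1 = s :=
      tsub_add_cancel_of_le (Finsupp.single_le_iff.mpr h)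
    rw [X, monomial_mul, one_mul, add_comm, hs]

lemma euler {n d : ℕ} {p : MvPolynomial (Fin n) ℂ} (hp : p.IsHomogeneous d) :
    ∑ i, X i * pderiv i p = C (d : ℂ) * p := by
  calc ∑ i, X i * pderiv i p
      = ∑ i, ∑ v ∈ p.support, X i * pderiv i (monomial v (coeff v p)) := by
        refine Finset.sum_congr rfl fun i _ => ?_
        conv_lhs => rw [p.as_sum]
        rw [map_sum, Finset.mul_sum]
    _ = ∑ v ∈ p.support, ∑ i, X i * pderiv i (monomial v (coeff v p)) := Finset.sum_comm
    _ = ∑ v ∈ p.support, C (d : ℂ) * monomial v (coeff v p) := by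
        refine Finset.sum_congr rfl fun v hv => ?_
        simp only [euler_mono]
        have hsum : ∑ i : Fin n, v i = d := by
          have hw := hp (mem_support_iff.mp hv)
          simp only [Finsupp.weight_apply, Finsupp.sum, Pi.one_apply, smul_eq_mul,
            mul_one] at hw
          rw [← hw]
          exact (Finset.sum_subset (Finset.subset_univ _)
            (fun x _ hx => Finsupp.notMem_support_iff.mp hx)).symm
        rw [← map_sum, ← Finset.mul_sum, ← Nat.cast_sum, hsum, C_mul_monomial, mul_comm]
    _ = C (d : ℂ) * p := by rw [← Finset.mul_sum, ← p.as_sum]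

theorem homogeneous_pieces_wedge_vanish
    (n : ℕ) (α2 α3 α4 α5 ω : Fin n → MvPolynomial (Fin n) ℂ)
    (h2 : ∀ i, (α2 i).IsHomogeneous 2)
    (h3 : ∀ i, (α3 i).IsHomogeneous 3)
    (h4 : ∀ i, (α4 i).IsHomogeneous 4)
    (h5 : ∀ i, (α5 i).IsHomogeneous 5)
    (hω : ∀ i, ω i = α2 i + α3 i + α4 i + α5 i)
    (hiR : ∑ i, X i * ω i = 0)
    (hint : ∀ i j k : Fin n,
      ω i * (pderiv j (ω k) - pderiv k (ω j))
        - ω j * (pderiv i (ω k) - pderiv k (ω i))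
        + ω k * (pderiv i (ω j) - pderiv j (ω i)) = 0) :
    (∀ a b : Fin n, α2 a * α3 b - α2 b * α3 a = 0) ∧
    (∀ a b : Fin n, α2 a * α4 b - α2 b * α4 a = 0) ∧
    (∀ a b : Fin n, α2 a * α5 b - α2 b * α5 a = 0) ∧
    (∀ a b : Fin n, α3 a * α4 b - α3 b * α4 a = 0) ∧
    (∀ a b : Fin n, α3 a * α5 b - α3 b * α5 a = 0) ∧
    (∀ a b : Fin n, α4 a * α5 b - α4 b * α5 a = 0) := by
  -- Euler identity for ω
  have E1 : ∀ b, ∑ i, X i * pderiv i (ω b)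
      = 2 * α2 b + 3 * α3 b + 4 * α4 b + 5 * α5 b := by
    intro b
    have : ∀ i : Fin n, X i * pderiv i (ω b)
        = X i * pderiv i (α2 b) + X i * pderiv i (α3 b)
          + X i * pderiv i (α4 b) + X i * pderiv i (α5 b) := by
      intro i; rw [hω b]; simp only [map_add, mul_add]
    rw [Finset.sum_congr rfl fun i _ => this i]
    simp only [Finset.sum_add_distrib]
    rw [euler (h2 b), euler (h3 b), euler (h4 b), euler (h5 b)]
    norm_num [map_ofNat]
  -- derivative of the contraction identity
  have E2 : ∀ b, ∑ i, X i * pderiv b (ω i) = - ω b := by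
    intro b
    have h := congrArg (pderiv b) hiR
    rw [map_sum, map_zero] at h
    simp only [pderiv_mul] at h
    rw [Finset.sum_add_distrib] at h
    have hx : ∑ i, pderiv b (X i) * ω i = ω b := by
      rw [Finset.sum_eq_single b]
      · rw [pderiv_X_self, one_mul]
      · intro i _ hib; rw [pderiv_X_of_ne hib, zero_mul]
      · intro hb; exact absurd (Finset.mem_univ b) hb
    rw [hx] at h
    linear_combination h
  -- the key wedge identity  ω ∧ i_R(dω) = 0, in terms of the αⱼ
  have key : ∀ a b : Fin n,
      (α2 a + α3 a + α4 a + α5 a) * (3 * α2 b + 4 * α3 b + 5 * α4 b + 6 * α5 b)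
        = (α2 b + α3 b + α4 b + α5 b) * (3 * α2 a + 4 * α3 a + 5 * α4 a + 6 * α5 a) := by
    intro a b
    have H : ∑ i, X i * (ω i * (pderiv a (ω b) - pderiv b (ω a))
        - ω a * (pderiv i (ω b) - pderiv b (ω i))
        + ω b * (pderiv i (ω a) - pderiv a (ω i))) = 0 := by
      rw [Finset.sum_eq_zero]; intro i _; rw [hint i a b, mul_zero]
    have H2 : (∑ i, X i * ω i) * (pderiv a (ω b) - pderiv b (ω a))
        - ω a * ((∑ i, X i * pderiv i (ω b)) - (∑ i, X i * pderiv b (ω i)))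
        + ω b * ((∑ i, X i * pderiv i (ω a)) - (∑ i, X i * pderiv a (ω i))) = 0 := by
      rw [← H]
      simp only [Finset.sum_mul, Finset.mul_sum, ← Finset.sum_sub_distrib,
        ← Finset.sum_add_distrib]
      refine Finset.sum_congr rfl fun i _ => ?_
      ring
    rw [hiR, E1 a, E1 b, E2 a, E2 b, hω a, hω b] at H2
    linear_combination -H2
  -- the homogeneous pieces of the key identity
  have hsum : ∀ a b : Fin n,
      (α2 a * α3 b - α2 b * α3 a) + 2 * (α2 a * α4 b - α2 b * α4 a)
        + (3 * (α2 a * α5 b - α2 b * α5 a) + (α3 a * α4 b - α3 b * α4 a))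
        + 2 * (α3 a * α5 b - α3 b * α5 a) + (α4 a * α5 b - α4 b * α5 a) = 0 := by
    intro a b
    linear_combination key a b
  have C2 : (2 : MvPolynomial (Fin n) ℂ) = C (2:ℂ) := (map_ofNat _ 2).symm
  have C3 : (3 : MvPolynomial (Fin n) ℂ) = C (3:ℂ) := (map_ofNat _ 3).symm
  have m5 : ∀ a b : Fin n,
      α2 a * α3 b - α2 b * α3 a ∈ homogeneousSubmodule (Fin n) ℂ 5 := fun a b =>
    (mem_homogeneousSubmodule _ _).mpr (((h2 a).mul (h3 b)).sub ((h2 b).mul (h3 a)))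
  have m6 : ∀ a b : Fin n,
      2 * (α2 a * α4 b - α2 b * α4 a) ∈ homogeneousSubmodule (Fin n) ℂ 6 := fun a b => by
    rw [C2]
    exact (mem_homogeneousSubmodule _ _).mpr
      ((((h2 a).mul (h4 b)).sub ((h2 b).mul (h4 a))).C_mul 2)
  have m7 : ∀ a b : Fin n,
      3 * (α2 a * α5 b - α2 b * α5 a) + (α3 a * α4 b - α3 b * α4 a)
        ∈ homogeneousSubmodule (Fin n) ℂ 7 := fun a b => by
    rw [C3]
    exact (mem_homogeneousSubmodule _ _).mpr
      (((((h2 a).mul (h5 b)).sub ((h2 b).mul (h5 a))).C_mul 3).add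
        (((h3 a).mul (h4 b)).sub ((h3 b).mul (h4 a))))
  have m8 : ∀ a b : Fin n,
      2 * (α3 a * α5 b - α3 b * α5 a) ∈ homogeneousSubmodule (Fin n) ℂ 8 := fun a b => by
    rw [C2]
    exact (mem_homogeneousSubmodule _ _).mpr
      ((((h3 a).mul (h5 b)).sub ((h3 b).mul (h5 a))).C_mul 2)
  have m9 : ∀ a b : Fin n,
      α4 a * α5 b - α4 b * α5 a ∈ homogeneousSubmodule (Fin n) ℂ 9 := fun a b =>
    (mem_homogeneousSubmodule _ _).mpr (((h4 a).mul (h5 b)).sub ((h4 b).mul (h5 a)))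
  have piece : ∀ (a b : Fin n) (d : ℕ),
      (if d = 5 then α2 a * α3 b - α2 b * α3 a else 0)
      + (if d = 6 then 2 * (α2 a * α4 b - α2 b * α4 a) else 0)
      + (if d = 7 then 3 * (α2 a * α5 b - α2 b * α5 a) + (α3 a * α4 b - α3 b * α4 a) else 0)
      + (if d = 8 then 2 * (α3 a * α5 b - α3 b * α5 a) else 0)
      + (if d = 9 then α4 a * α5 b - α4 b * α5 a else 0) = 0 := by
    intro a b d
    have h := congrArg (homogeneousComponent d) (hsum a b)
    rw [map_zero, map_add, map_add, map_add, map_add,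
      homogeneousComponent_of_mem (m5 a b), homogeneousComponent_of_mem (m6 a b),
      homogeneousComponent_of_mem (m7 a b), homogeneousComponent_of_mem (m8 a b),
      homogeneousComponent_of_mem (m9 a b)] at h
    exact h
  have two_ne : (2 : MvPolynomial (Fin n) ℂ) ≠ 0 := two_ne_zero
  have e5 : ∀ a b : Fin n, α2 a * α3 b - α2 b * α3 a = 0 := by
    intro a b; have h := piece a b 5; norm_num at h; exact h
  have e6 : ∀ a b : Fin n, α2 a * α4 b - α2 b * α4 a = 0 := by
    intro a b; have h := piece a b 6; norm_num at h; exact h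
  have e7 : ∀ a b : Fin n,
      3 * (α2 a * α5 b - α2 b * α5 a) + (α3 a * α4 b - α3 b * α4 a) = 0 := by
    intro a b; have h := piece a b 7; norm_num at h; exact h
  have e8 : ∀ a b : Fin n, α3 a * α5 b - α3 b * α5 a = 0 := by
    intro a b; have h := piece a b 8; norm_num at h; exact h
  have e9 : ∀ a b : Fin n, α4 a * α5 b - α4 b * α5 a = 0 := by
    intro a b; have h := piece a b 9; norm_num at h; exact h
  -- the (3,4) wedge vanishes, by proportionality through α2
  have e34 : ∀ a b : Fin n, α3 a * α4 b - α3 b * α4 a = 0 := by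
    intro a b
    by_cases hα2 : ∀ c, α2 c = 0
    · have h := e7 a b
      simp only [hα2, zero_mul, mul_zero, sub_zero, zero_sub, neg_zero, mul_zero] at h
      linear_combination h
    · push_neg at hα2
      obtain ⟨c, hc⟩ := hα2
      have key2 : α2 c ^ 2 * (α3 a * α4 b - α3 b * α4 a) = 0 := by
        have h1 := e5 a c
        have h2 := e5 b c
        have h3 := e6 a c
        have h4 := e6 b c
        linear_combination (-(α2 c * α4 b)) * h1 + (α2 c * α4 a) * h2
          + (α2 b * α3 c) * h3 + (-(α2 a * α3 c)) * h4
      rcases mul_eq_zero.mp key2 with h' | h'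
      · exact absurd h' (pow_ne_zero 2 hc)
      · exact h'
  have e25 : ∀ a b : Fin n, α2 a * α5 b - α2 b * α5 a = 0 := by
    intro a b
    have h := e7 a b
    rw [e34 a b, add_zero] at h
    rcases mul_eq_zero.mp h with h' | h'
    · exact absurd h' (by norm_num)
    · exact h'
  exact ⟨e5, e6, e25, e34, e8, e9⟩
end

section
/- Let β_0, β_1, β_2 be 1-forms on a manifold M satisfying dβ_0 = 0, dβ_1 = 2β_0 ∧ β_2, dβ_2 = β_1 ∧ β_2, and β_0 ∧ β_1 = 0 with β_0 ≠ 0. Suppose β_1 = g β_0 for a meromorphic function g. Then there exists a meromorphic function h with β_2 = h β_0 − dg/2, and moreover d(h − g²/4) ∧ β_0 = 0. -/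
/-!
STATEMENT 8. Let β₀, β₁, β₂ be meromorphic 1-forms on a complex manifold M with
dβ₀ = 0, dβ₁ = 2β₀ ∧ β₂, dβ₂ = β₁ ∧ β₂, β₀ ∧ β₁ = 0 and β₀ ≠ 0.  Suppose
β₁ = g β₀ for a meromorphic function g (the division property for 1-forms:
β₀ ∧ γ = 0 implies γ is a meromorphic multiple of β₀, is assumed).  Then there
exists a meromorphic function h with β₂ = h β₀ − dg/2, and moreover
d(h − g²/4) ∧ β₀ = 0.
-/

theorem existence_of_h_and_first_integral_relation
    -- Abstract exterior calculus of meromorphic forms: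
    -- F = meromorphic functions, O1/O2/O3 = meromorphic 1-/2-/3-forms
    (F : Type*) [Field F] [CharZero F]
    (O1 O2 O3 : Type*)
    [AddCommGroup O1] [AddCommGroup O2] [AddCommGroup O3]
    [Module F O1] [Module F O2] [Module F O3]
    -- exterior derivatives
    (d0 : F →+ O1) (d1 : O1 →+ O2) (d2 : O2 →+ O3)
    -- wedge products (1-form ∧ 1-form, 1-form ∧ 2-form)
    (w11 : O1 →ₗ[F] O1 →ₗ[F] O2) (w12 : O1 →ₗ[F] O2 →ₗ[F] O3)
    (hd0mul : ∀ f g : F, d0 (f * g) = f • d0 g + g • d0 f)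
    (hd1smul : ∀ (f : F) (a : O1), d1 (f • a) = w11 (d0 f) a + f • d1 a)
    (hd2smul : ∀ (f : F) (m : O2), d2 (f • m) = w12 (d0 f) m + f • d2 m)
    (hd1d0 : ∀ f : F, d1 (d0 f) = 0)
    (hd2d1 : ∀ a : O1, d2 (d1 a) = 0)
    (halt : ∀ a : O1, w11 a a = 0)
    (hanti : ∀ a b : O1, w11 a b = - w11 b a)
    (hd2w11 : ∀ a b : O1, d2 (w11 a b) = w12 b (d1 a) - w12 a (d1 b))
    (β0 β1 β2 : O1)
    (hβ0 : d1 β0 = 0)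
    (hβ1 : d1 β1 = (2 : F) • w11 β0 β2)
    (hβ2 : d1 β2 = w11 β1 β2)
    (hw01 : w11 β0 β1 = 0)
    (hβ0ne : β0 ≠ 0)
    -- division property for 1-forms
    (hdiv : ∀ γ : O1, w11 β0 γ = 0 → ∃ f : F, γ = f • β0)
    (g : F) (hg : β1 = g • β0) :
    ∃ h : F, β2 = h • β0 - (2 : F)⁻¹ • d0 g ∧ w11 (d0 (h - g ^ 2 / 4)) β0 = 0 := by
  have two_ne : (2 : F) ≠ 0 := two_ne_zero
  -- d0 of constants
  have hd01 : d0 (1 : F) = 0 := by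
    have h := hd0mul 1 1
    simp only [one_mul, one_smul] at h
    exact (left_eq_add.mp h)
  have hd02 : d0 (2 : F) = 0 := by
    have : (2 : F) = 1 + 1 := by norm_num
    rw [this, map_add, hd01, add_zero]
  have hd02inv : d0 ((2 : F)⁻¹) = 0 := by
    have h := hd0mul (2 : F)⁻¹ 2
    rw [inv_mul_cancel₀ two_ne, hd01, hd02, smul_zero, zero_add] at h
    exact (smul_eq_zero.mp h.symm).resolve_left two_ne
  have hd04 : d0 (4 : F) = 0 := by
    have : (4 : F) = 1 + 1 + 1 + 1 := by norm_num
    rw [this, map_add, map_add, map_add, hd01, add_zero, add_zero, add_zero]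
  have hd04inv : d0 ((4 : F)⁻¹) = 0 := by
    have h := hd0mul (4 : F)⁻¹ 4
    rw [inv_mul_cancel₀ (by norm_num : (4:F) ≠ 0), hd01, hd04, smul_zero, zero_add] at h
    exact (smul_eq_zero.mp h.symm).resolve_left (by norm_num)
  -- step 1: find h
  have hd1β1 : d1 β1 = w11 (d0 g) β0 := by
    rw [hg, hd1smul, hβ0, smul_zero, add_zero]
  have hkey : w11 β0 (β2 + (2:F)⁻¹ • d0 g) = 0 := by
    have h2 : (2:F) • w11 β0 β2 = w11 (d0 g) β0 := by rw [← hβ1, hd1β1]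
    have h3 : w11 β0 (d0 g) = - ((2:F) • w11 β0 β2) := by
      rw [h2, hanti (d0 g) β0, neg_neg]
    rw [map_add, map_smul, h3, smul_neg, smul_smul,
      inv_mul_cancel₀ two_ne, one_smul, add_neg_cancel]
  obtain ⟨h, hh⟩ := hdiv _ hkey
  have hβ2eq : β2 = h • β0 - (2:F)⁻¹ • d0 g := by
    rw [← hh]; abel
  refine ⟨h, hβ2eq, ?_⟩
  -- step 2: the first-integral relation
  have hd1smul' : d1 ((2:F)⁻¹ • d0 g) = 0 := by
    rw [hd1smul, hd02inv, hd1d0, smul_zero, add_zero, map_zero, LinearMap.zero_apply]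
  have lhs : d1 β2 = w11 (d0 h) β0 := by
    rw [hβ2eq, map_sub, hd1smul, hβ0, smul_zero, add_zero, hd1smul', sub_zero]
  have rhs : d1 β2 = (g * (2:F)⁻¹) • w11 (d0 g) β0 := by
    rw [hβ2, hg, hβ2eq]
    simp only [map_smul, LinearMap.smul_apply, map_sub, halt, smul_zero, zero_sub,
      hanti β0 (d0 g), smul_neg, neg_neg, smul_smul, mul_comm (2:F)⁻¹ g]
  have hmain : w11 (d0 h) β0 = (g * (2:F)⁻¹) • w11 (d0 g) β0 := by
    rw [← lhs, rhs]
  have hdg2 : d0 (g ^ 2 / 4) = (g * (2:F)⁻¹) • d0 g := by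
    have h4 : g ^ 2 / 4 = (4:F)⁻¹ * (g * g) := by ring
    rw [h4, hd0mul, hd04inv, smul_zero, add_zero, hd0mul, smul_add, smul_smul,
      ← add_smul]
    congr 1
    ring
  rw [map_sub, hdg2, map_sub, LinearMap.sub_apply, map_smul, LinearMap.smul_apply,
    hmain, sub_self]
end

section
/- Let ω = α_2 + α_3 + α_4 + α_5 with α_j homogeneous of degree j and i_R(α_5) = 0. Then under the blow-up chart σ(τ,x) = (xτ, x), one has σ*(ω) = x²·η where η = x θ_2 + x² θ_3 + x³ θ_4 + x⁴ θ_5 + (F_3(τ,1) + x F_4(τ,1) + x² F_5(τ,1)) dx; in particular the coefficient of x³ dx vanishes because F_6(τ,1) = i_R(α_5)(τ,1) = 0. -/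
/-!
STATEMENT 14. Let ω = α₂ + α₃ + α₄ + α₅ with αⱼ = Σᵢ P_{ji} dzᵢ homogeneous of degree j
and i_R(α₅) = 0.  Under the blow-up chart σ(τ,x) = (xτ, x) one has σ*(ω) = x²·η with
η = x θ₂ + x² θ₃ + x³ θ₄ + x⁴ θ₅ + (F₃(τ,1) + x F₄(τ,1) + x² F₅(τ,1)) dx,
θⱼ = Σ_{i<n} P_{ji}(τ,1) dτᵢ, F_{j+1}(τ,1) = Σ_{i<n} P_{ji}(τ,1)τᵢ + P_{j,last}(τ,1);
in particular the x³dx-coefficient vanishes because F₆(τ,1) = i_R(α₅)(τ,1) = 0.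
Stated componentwise in the dτᵢ- and dx-coefficients.
-/

open MvPolynomial

lemma aeval_mul_of_isHomogeneous {σ : Type*} {R : Type*} [CommRing R] {d : ℕ}
    {P : MvPolynomial σ R} (hP : P.IsHomogeneous d) (r : MvPolynomial σ R)
    (f : σ → MvPolynomial σ R) :
    aeval (fun i => r * f i) P = r ^ d * aeval f P := by
  conv_lhs => rw [P.as_sum]
  conv_rhs => rw [P.as_sum]
  rw [map_sum, map_sum, Finset.mul_sum]
  refine Finset.sum_congr rfl fun s hs => ?_
  rw [aeval_monomial, aeval_monomial]
  have hdeg : (s.sum fun _ e => e) = d := by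
    simpa [Finsupp.weight_apply, Finsupp.sum] using hP (mem_support_iff.mp hs)
  have : (s.prod fun i k => (r * f i) ^ k) = r ^ d * s.prod fun i k => f i ^ k := by
    simp_rw [mul_pow]
    rw [Finsupp.prod_mul, ← hdeg, Finsupp.prod, Finsupp.sum, Finset.prod_pow_eq_pow_sum]
  rw [this]; ring

theorem blowup_pullback_of_degree_four_form
    (n : ℕ) (P2 P3 P4 P5 : Fin (n + 1) → MvPolynomial (Fin (n + 1)) ℂ)
    (h2 : ∀ i, (P2 i).IsHomogeneous 2)
    (h3 : ∀ i, (P3 i).IsHomogeneous 3)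
    (h4 : ∀ i, (P4 i).IsHomogeneous 4)
    (h5 : ∀ i, (P5 i).IsHomogeneous 5)
    -- i_R(α₅) = 0 on ℂ^{n+1}
    (hiR : ∑ i, X i * P5 i = 0)
    (subst : MvPolynomial (Fin (n + 1)) ℂ →ₐ[ℂ] MvPolynomial (Fin (n + 1)) ℂ)
    (hsubst : subst = aeval fun i : Fin (n + 1) =>
      if i = Fin.last n then X (Fin.last n) else X (Fin.last n) * X i)
    (atOne : MvPolynomial (Fin (n + 1)) ℂ →ₐ[ℂ] MvPolynomial (Fin (n + 1)) ℂ)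
    (hatOne : atOne = aeval fun i : Fin (n + 1) =>
      if i = Fin.last n then 1 else X i)
    (F3 F4 F5 : MvPolynomial (Fin (n + 1)) ℂ)
    (hF3 : F3 = (∑ i : Fin n, X i.castSucc * atOne (P2 i.castSucc)) + atOne (P2 (Fin.last n)))
    (hF4 : F4 = (∑ i : Fin n, X i.castSucc * atOne (P3 i.castSucc)) + atOne (P3 (Fin.last n)))
    (hF5 : F5 = (∑ i : Fin n, X i.castSucc * atOne (P4 i.castSucc)) + atOne (P4 (Fin.last n))) :
    -- dτ_i coefficients of σ*(ω) equal x² times those of η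
    (∀ i : Fin n,
      X (Fin.last n) *
          (subst (P2 i.castSucc) + subst (P3 i.castSucc)
            + subst (P4 i.castSucc) + subst (P5 i.castSucc))
        = X (Fin.last n) ^ 2 *
          (X (Fin.last n) * atOne (P2 i.castSucc)
            + X (Fin.last n) ^ 2 * atOne (P3 i.castSucc)
            + X (Fin.last n) ^ 3 * atOne (P4 i.castSucc)
            + X (Fin.last n) ^ 4 * atOne (P5 i.castSucc))) ∧
    -- dx coefficient of σ*(ω) equals x²(F₃ + x F₄ + x² F₅): no x³-term, since F₆ = 0
    ((∑ i : Fin n, X i.castSucc *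
          (subst (P2 i.castSucc) + subst (P3 i.castSucc)
            + subst (P4 i.castSucc) + subst (P5 i.castSucc)))
        + (subst (P2 (Fin.last n)) + subst (P3 (Fin.last n))
            + subst (P4 (Fin.last n)) + subst (P5 (Fin.last n)))
      = X (Fin.last n) ^ 2 *
          (F3 + X (Fin.last n) * F4 + X (Fin.last n) ^ 2 * F5)) := by
  subst hsubst hatOne hF3 hF4 hF5
  set L := Fin.last n with hL
  have key : ∀ (d : ℕ) (P : MvPolynomial (Fin (n+1)) ℂ), P.IsHomogeneous d →
      (aeval fun i : Fin (n+1) => if i = L then X L else X L * X i) P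
        = (X L : MvPolynomial (Fin (n+1)) ℂ) ^ d * (aeval fun i : Fin (n+1) => if i = L then 1 else X i) P := by
    intro d P hP
    have hfun : (fun i : Fin (n+1) => if i = L then X L else X L * X i)
        = fun i : Fin (n+1) => X L * (if i = L then (1 : MvPolynomial (Fin (n+1)) ℂ) else X i) := by
      funext i; split_ifs <;> ring
    rw [hfun, aeval_mul_of_isHomogeneous hP (X L) _]
  set A : MvPolynomial (Fin (n+1)) ℂ →ₐ[ℂ] MvPolynomial (Fin (n+1)) ℂ :=
    aeval fun i : Fin (n+1) => if i = L then (1 : MvPolynomial (Fin (n+1)) ℂ) else X i with hA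
  have hF6 : (∑ i : Fin n, X i.castSucc * A (P5 i.castSucc)) + A (P5 L) = 0 := by
    have := congrArg A hiR
    rw [map_sum, map_zero] at this
    rw [Fin.sum_univ_castSucc] at this
    have hAX : ∀ j, A (X j) = if j = L then 1 else X j := fun j => by rw [hA, aeval_X]
    simp only [map_mul, hAX] at this
    simpa [hL, (Fin.castSucc_lt_last _).ne] using this
  constructor
  · intro i
    rw [key 2 _ (h2 _), key 3 _ (h3 _), key 4 _ (h4 _), key 5 _ (h5 _)]
    ring
  · simp only [key 2 _ (h2 _), key 3 _ (h3 _), key 4 _ (h4 _), key 5 _ (h5 _)]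
    have expand : ∀ i : Fin n, X (i.castSucc) *
        (X L ^ 2 * A (P2 i.castSucc)
          + X L ^ 3 * A (P3 i.castSucc)
          + X L ^ 4 * A (P4 i.castSucc)
          + X L ^ 5 * A (P5 i.castSucc))
        = X L ^ 2 * (X (i.castSucc) * A (P2 i.castSucc))
          + X L ^ 3 * (X (i.castSucc) * A (P3 i.castSucc))
          + X L ^ 4 * (X (i.castSucc) * A (P4 i.castSucc))
          + X L ^ 5 * (X (i.castSucc) * A (P5 i.castSucc)) := by
      intro i; ring
    simp only [expand, Finset.sum_add_distrib, ← Finset.mul_sum]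
    rw [show (X L : MvPolynomial (Fin (n+1)) ℂ) ^ 5 *
        ∑ i : Fin n, X i.castSucc * A (P5 i.castSucc)
        = X L ^ 5 * (-A (P5 L)) by
      congr 1; linear_combination hF6]
    ring
end
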